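/- Let G be a finite group, p a prime, P a nontrivial p-subgroup, and Q a p-subgroup with P < Q. If Z(Q) contains a nontrivial element of central type (order p, central in some Sylow p-subgroup of G), then so does Z(N_Q(P)). In particular P < N_Q(P) and N_Q(P) is distinguished. -/

import Mathlib

/-- The center of a subgroup `P`, viewed as a subgroup of the ambient group `G`. -/
def ZS {G : Type*} [Group G] (P : Subgroup G) : Subgroup G :=
  Subgroup.centralizer (P : Set G) ⊓ P

/-- If `P < Q` are `p`-subgroups with `P` nontrivial and `Z(Q)` contains a nontrivial
element of central type, then `P < N_Q(P)` and `Z(N_Q(P))` contains a nontrivial element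
of central type, i.e. `N_Q(P)` is distinguished. -/
theorem stmt6 {G : Type*} [Group G] [Fintype G] {p : ℕ} [Fact p.Prime]
    (P Q : Subgroup G) (hP : IsPGroup p ↥P) (hQ : IsPGroup p ↥Q)
    (hPne : P ≠ ⊥) (hlt : P < Q)
    (hx : ∃ x ∈ ZS Q, x ≠ 1 ∧ orderOf x = p ∧
      ∃ S : Sylow p G, x ∈ ZS (S : Subgroup G)) :
    P < Q ⊓ Subgroup.normalizer (P : Set G) ∧
      ∃ y ∈ ZS (Q ⊓ Subgroup.normalizer (P : Set G)), y ≠ 1 ∧ orderOf y = p ∧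
        ∃ S : Sylow p G, y ∈ ZS (S : Subgroup G) := by
  constructor
  · -- P < Q ⊓ P.normalizer
    have hnil : Group.IsNilpotent ↥Q := hQ.isNilpotent
    have hnc : NormalizerCondition ↥Q := normalizerCondition_of_isNilpotent
    have hHne : P.subgroupOf Q < ⊤ := by
      rw [lt_top_iff_ne_top]
      intro h
      exact absurd (Subgroup.subgroupOf_eq_top.mp h) (not_le_of_gt hlt)
    have hlt' := hnc _ hHne
    obtain ⟨x, hxn, hxH⟩ := SetLike.exists_of_lt hlt'
    have hxnorm : (x : G) ∈ Subgroup.normalizer (P : Set G) := by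
      rw [Subgroup.mem_normalizer_iff] at hxn ⊢
      intro g
      constructor
      · intro hg
        have hgQ : g ∈ Q := hlt.le hg
        have := (hxn ⟨g, hgQ⟩).mp (by simpa [Subgroup.mem_subgroupOf] using hg)
        simpa [Subgroup.mem_subgroupOf] using this
      · intro hg
        have hgQ : g ∈ Q := by
          have : (x : G)⁻¹ * ((x : G) * g * (x : G)⁻¹) * x ∈ Q :=
            Q.mul_mem (Q.mul_mem (Q.inv_mem x.2) (hlt.le hg)) x.2
          simpa [mul_assoc] using this
        have := (hxn ⟨g, hgQ⟩).mpr (by simpa [Subgroup.mem_subgroupOf] using hg)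
        simpa [Subgroup.mem_subgroupOf] using this
    refine lt_of_le_of_ne (le_inf hlt.le P.le_normalizer) fun h => ?_
    have : (x : G) ∈ P := by
      rw [h]; exact ⟨x.2, hxnorm⟩
    exact hxH (by simpa [Subgroup.mem_subgroupOf] using this)
  · obtain ⟨x, hxZ, hx1, hxo, S, hxS⟩ := hx
    obtain ⟨hxc, hxQ⟩ := hxZ
    have hxnorm : x ∈ Subgroup.normalizer (P : Set G) := by
      rw [Subgroup.mem_normalizer_iff]
      intro g
      constructor
      · intro hg
        have hc := Subgroup.mem_centralizer_iff.mp hxc g (hlt.le hg)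
        have hxg : x * g * x⁻¹ = g := by rw [← hc]; group
        rwa [hxg]
      · intro hg
        have hgQ : g ∈ Q := by
          have : x⁻¹ * (x * g * x⁻¹) * x ∈ Q :=
            Q.mul_mem (Q.mul_mem (Q.inv_mem hxQ) (hlt.le hg)) hxQ
          simpa [mul_assoc] using this
        have hc := Subgroup.mem_centralizer_iff.mp hxc g hgQ
        have hxg : x * g * x⁻¹ = g := by rw [← hc]; group
        rwa [hxg] at hg
    refine ⟨x, ⟨?_, ⟨hxQ, hxnorm⟩⟩, hx1, hxo, S, hxS⟩
    exact Subgroup.centralizer_le (by exact_mod_cast inf_le_left (b := Subgroup.normalizer (P : Set G))) hxc
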